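/- Let λ ∈ ℝ, and let u be a real C² solution on [0,1) of u'' + (2/ρ - 2λρ/(1-ρ²))u' - (2cos(2f₀)/(ρ²(1-ρ²)) + λ(1+λ)/(1-ρ²))u = 0 with u(0) = 0 and u'(0) > 0. Then u(ρ) > 0 for all ρ ∈ (0,1). -/

import Mathlib

noncomputable def f₀ : ℝ → ℝ := fun ρ => 2 * Real.arctan ρ

lemma cos_two_f₀ (ρ : ℝ) : Real.cos (2 * f₀ ρ) = (1 - 6*ρ^2 + ρ^4)/(1+ρ^2)^2 := by
  have h1 : (0:ℝ) < 1 + ρ^2 := by positivity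
  have hc : Real.cos (2 * Real.arctan ρ) = (1 - ρ^2)/(1+ρ^2) := by
    rw [Real.cos_two_mul, Real.cos_arctan, div_pow, one_pow, Real.sq_sqrt h1.le]
    field_simp
    ring
  have h2 : (2 : ℝ) * f₀ ρ = 2 * (2 * Real.arctan ρ) := by simp only [f₀]
  rw [h2, Real.cos_two_mul, hc]
  field_simp
  ring

noncomputable def θf : ℝ → ℝ := fun ρ => 2*ρ/(1+ρ^2)
noncomputable def θd : ℝ → ℝ := fun ρ => 2*(1-ρ^2)/(1+ρ^2)^2
noncomputable def tf (lam : ℝ) : ℝ → ℝ := fun ρ => (1-ρ^2) ^ ((lam-1)/2)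
noncomputable def Ef (lam : ℝ) (u : ℝ → ℝ) : ℝ → ℝ :=
  fun ρ => ρ^2*(1-ρ^2)*tf lam ρ*(deriv u ρ*θf ρ - u ρ*θd ρ) - (lam-1)*ρ^3*tf lam ρ*(u ρ*θf ρ)
noncomputable def Ff (lam : ℝ) (u : ℝ → ℝ) : ℝ → ℝ := fun ρ => u ρ/θf ρ * tf lam ρ

lemma θf_pos {ρ : ℝ} (h : 0 < ρ) : 0 < θf ρ := by
  have : (0:ℝ) < 1 + ρ^2 := by positivity
  exact div_pos (by linarith) this

lemma tf_pos (lam : ℝ) {ρ : ℝ} (h : ρ ∈ Set.Ioo (-1:ℝ) 1) : 0 < tf lam ρ := by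
  have : (0:ℝ) < 1 - ρ^2 := by nlinarith [h.1, h.2]
  exact Real.rpow_pos_of_pos this _

lemma hasDerivAt_θf (ρ : ℝ) : HasDerivAt θf (θd ρ) ρ := by
  have h1 : (0:ℝ) < 1 + ρ^2 := by positivity
  have h := (((hasDerivAt_id ρ).const_mul (2:ℝ)).div
    (((hasDerivAt_pow 2 ρ).const_add (1:ℝ))) (by positivity))
  refine h.congr_deriv (Eq.symm ?_)
  simp only [θd]
  simp only [id]
  field_simp
  ring

lemma hasDerivAt_θd (ρ : ℝ) : HasDerivAt θd (-4*ρ*(3-ρ^2)/(1+ρ^2)^3) ρ := by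
  have h1 : (0:ℝ) < 1 + ρ^2 := by positivity
  have h := ((((hasDerivAt_pow 2 ρ).const_sub (1:ℝ)).const_mul (2:ℝ)).div
    (((hasDerivAt_pow 2 ρ).const_add (1:ℝ)).pow 2) (by simp only [Pi.pow_apply]; positivity))
  refine h.congr_deriv (Eq.symm ?_)
  simp only [Pi.pow_apply]
  field_simp
  ring

lemma hasDerivAt_tf (lam : ℝ) {ρ : ℝ} (h : ρ ∈ Set.Ioo (-1:ℝ) 1) :
    HasDerivAt (tf lam) (-(lam-1)*ρ/(1-ρ^2) * tf lam ρ) ρ := by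
  have hpos : (0:ℝ) < 1 - ρ^2 := by nlinarith [h.1, h.2]
  have hinner : HasDerivAt (fun x : ℝ => 1 - x^2) (-(2*ρ)) ρ := by
    simpa using ((hasDerivAt_pow 2 ρ).const_sub (1:ℝ))
  have houter := Real.hasDerivAt_rpow_const (x := 1-ρ^2) (p := (lam-1)/2) (Or.inl hpos.ne')
  have hcomp := HasDerivAt.comp ρ houter hinner
  refine hcomp.congr_deriv (Eq.symm ?_)
  rw [Real.rpow_sub hpos, Real.rpow_one]
  simp only [tf]
  field_simp

lemma Ef_hasDerivAt (lam : ℝ) (u : ℝ → ℝ) {ρ : ℝ} (hρ : ρ ∈ Set.Ioo (0:ℝ) 1)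
    (hU : HasDerivAt u (deriv u ρ) ρ)
    (hU1 : HasDerivAt (deriv u) (deriv (deriv u) ρ) ρ)
    (heq : deriv (deriv u) ρ + (2 / ρ - 2 * lam * ρ / (1 - ρ^2)) * deriv u ρ
        - (2 * Real.cos (2 * f₀ ρ) / (ρ^2 * (1 - ρ^2)) + lam * (1 + lam) / (1 - ρ^2)) * u ρ = 0) :
    HasDerivAt (Ef lam u) ((lam-1)^2*ρ^2*tf lam ρ*(u ρ*θf ρ)/(1-ρ^2)) ρ := by
  obtain ⟨hρ0, hρ1⟩ := hρ
  have hm : ρ ∈ Set.Ioo (-1:ℝ) 1 := ⟨by linarith, hρ1⟩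
  have h1ρ : (0:ℝ) < 1 - ρ^2 := by nlinarith
  have h2ρ : (0:ℝ) < 1 + ρ^2 := by positivity
  have hT := hasDerivAt_tf lam hm
  have hTh := hasDerivAt_θf ρ
  have hThd := hasDerivAt_θd ρ
  have hpoly : HasDerivAt (fun x : ℝ => x^2*(1-x^2)) (2*ρ*(1-ρ^2) + ρ^2*(-(2*ρ))) ρ := by
    have := (hasDerivAt_pow 2 ρ).mul (((hasDerivAt_pow 2 ρ)).const_sub (1:ℝ))
    refine this.congr_deriv (Eq.symm ?_)
    push_cast
    ring
  have hpoly3 : HasDerivAt (fun x : ℝ => (lam-1)*x^3) ((lam-1)*(3*ρ^2)) ρ := by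
    have := (hasDerivAt_pow 3 ρ).const_mul (lam-1)
    refine this.congr_deriv (Eq.symm ?_)
    push_cast
    ring
  have hinner : HasDerivAt (fun x => deriv u x * θf x - u x * θd x)
      (deriv (deriv u) ρ * θf ρ + deriv u ρ * θd ρ
        - (deriv u ρ * θd ρ + u ρ * (-4*ρ*(3-ρ^2)/(1+ρ^2)^3))) ρ :=
    (hU1.mul hTh).sub (hU.mul hThd)
  have hE := ((hpoly.mul hT).mul hinner).sub ((hpoly3.mul hT).mul (hU.mul hTh))
  refine hE.congr_deriv (Eq.symm ?_)
  have hu2 : deriv (deriv u) ρ = -( (2 / ρ - 2 * lam * ρ / (1 - ρ^2)) * deriv u ρ)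
      + (2 * ((1 - 6*ρ^2 + ρ^4)/(1+ρ^2)^2) / (ρ^2 * (1 - ρ^2)) + lam * (1 + lam) / (1 - ρ^2)) * u ρ := by
    rw [← cos_two_f₀]
    linarith
  rw [hu2]
  simp only [Pi.mul_apply, Pi.sub_apply]
  simp only [θf, θd]
  field_simp
  ring

lemma Ff_hasDerivAt (lam : ℝ) (u : ℝ → ℝ) {ρ : ℝ} (hρ : ρ ∈ Set.Ioo (0:ℝ) 1)
    (hU : HasDerivAt u (deriv u ρ) ρ) :
    HasDerivAt (Ff lam u) (Ef lam u ρ/(ρ^2*(1-ρ^2)*θf ρ^2)) ρ := by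
  obtain ⟨hρ0, hρ1⟩ := hρ
  have hm : ρ ∈ Set.Ioo (-1:ℝ) 1 := ⟨by linarith, hρ1⟩
  have h1ρ : (0:ℝ) < 1 - ρ^2 := by nlinarith
  have h2ρ : (0:ℝ) < 1 + ρ^2 := by positivity
  have hθ := θf_pos hρ0
  have hF := (hU.div (hasDerivAt_θf ρ) hθ.ne').mul (hasDerivAt_tf lam hm)
  refine hF.congr_deriv (Eq.symm ?_)
  simp only [Ef, θf, θd] at *
  simp only [Pi.div_apply, θf]
  field_simp
  ring

theorem no_zeros_of_eigenfunction (lam : ℝ) (u : ℝ → ℝ)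
    (hu : ContDiffOn ℝ 2 u (Set.Ico (0:ℝ) 1))
    (heq : ∀ ρ ∈ Set.Ioo (0:ℝ) 1,
      deriv (deriv u) ρ + (2 / ρ - 2 * lam * ρ / (1 - ρ^2)) * deriv u ρ
        - (2 * Real.cos (2 * f₀ ρ) / (ρ^2 * (1 - ρ^2)) + lam * (1 + lam) / (1 - ρ^2)) * u ρ = 0)
    (h0 : u 0 = 0)
    (h0' : 0 < derivWithin u (Set.Ico (0:ℝ) 1) 0) :
    ∀ ρ ∈ Set.Ioo (0:ℝ) 1, 0 < u ρ := by
  by_contra hcon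
  push_neg at hcon
  obtain ⟨b, hb, hub⟩ := hcon
  have hIoo : Set.Ioo (0:ℝ) 1 ⊆ Set.Ico 0 1 := Set.Ioo_subset_Ico_self
  have hopen : IsOpen (Set.Ioo (0:ℝ) 1) := isOpen_Ioo
  have huIoo : ContDiffOn ℝ 2 u (Set.Ioo 0 1) := hu.mono hIoo
  have hd1 : ContDiffOn ℝ 1 (deriv u) (Set.Ioo 0 1) :=
    huIoo.deriv_of_isOpen hopen (by norm_num)
  have hdu : ∀ ρ ∈ Set.Ioo (0:ℝ) 1, HasDerivAt u (deriv u ρ) ρ := fun ρ hρ =>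
    ((huIoo.differentiableOn (by norm_num) ρ hρ).differentiableAt
      (hopen.mem_nhds hρ)).hasDerivAt
  have hdu1 : ∀ ρ ∈ Set.Ioo (0:ℝ) 1, HasDerivAt (deriv u) (deriv (deriv u) ρ) ρ := fun ρ hρ =>
    ((hd1.differentiableOn (by norm_num) ρ hρ).differentiableAt
      (hopen.mem_nhds hρ)).hasDerivAt
  set a := derivWithin u (Set.Ico (0:ℝ) 1) 0 with hadef
  have h0Ico : (0:ℝ) ∈ Set.Ico (0:ℝ) 1 := ⟨le_refl 0, by norm_num⟩
  haveI hNB : (nhdsWithin (0:ℝ) (Set.Ioo (0:ℝ) 1)).NeBot := by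
    rw [← mem_closure_iff_nhdsWithin_neBot, closure_Ioo (by norm_num : (0:ℝ) ≠ 1)]
    exact ⟨le_refl 0, by norm_num⟩
  -- slope limit
  have hder0 : HasDerivWithinAt u a (Set.Ico (0:ℝ) 1) 0 :=
    (hu.differentiableOn (by norm_num) 0 h0Ico).hasDerivWithinAt
  have hslope : Filter.Tendsto (fun ρ => u ρ / ρ) (nhdsWithin 0 (Set.Ioo (0:ℝ) 1)) (nhds a) := by
    have h := hasDerivWithinAt_iff_tendsto_slope.1 hder0
    have hsub : Set.Ioo (0:ℝ) 1 ⊆ Set.Ico 0 1 \ {0} := fun x hx =>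
      ⟨hIoo hx, ne_of_gt hx.1⟩
    refine (h.mono_left (nhdsWithin_mono 0 hsub)).congr ?_
    intro x
    simp [slope_def_field, h0]
  -- u positive near 0
  have hpos_ev : ∀ᶠ ρ in nhdsWithin 0 (Set.Ioo (0:ℝ) 1), 0 < u ρ := by
    have h1 : ∀ᶠ ρ in nhdsWithin 0 (Set.Ioo (0:ℝ) 1), 0 < u ρ / ρ :=
      hslope.eventually (eventually_gt_nhds h0')
    filter_upwards [h1, eventually_mem_nhdsWithin] with x hx hmem
    have := mul_pos hx hmem.1
    rwa [div_mul_cancel₀ _ (ne_of_gt hmem.1)] at this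
  rw [eventually_nhdsWithin_iff, Metric.eventually_nhds_iff] at hpos_ev
  obtain ⟨ε, hε, hev⟩ := hpos_ev
  set δ := min (ε/2) (b/2) with hδdef
  have hδpos : 0 < δ := lt_min (by linarith) (by linarith [hb.1])
  have hδb : δ < b := lt_of_le_of_lt (min_le_right _ _) (by linarith [hb.1])
  have hδ1 : δ < 1 := lt_trans hδb hb.2
  have hupos0 : ∀ x ∈ Set.Ioc (0:ℝ) δ, 0 < u x := by
    intro x hx
    have hx1 : x < 1 := lt_of_le_of_lt hx.2 hδ1
    refine hev ?_ ⟨hx.1, hx1⟩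
    rw [Real.dist_eq, sub_zero, abs_of_pos hx.1]
    exact lt_of_le_of_lt hx.2 (lt_of_le_of_lt (min_le_left _ _) (by linarith))
  -- first zero
  set S := {x ∈ Set.Icc δ b | u x ≤ 0} with hSdef
  have hSne : S.Nonempty := ⟨b, ⟨hδb.le, le_refl b⟩, hub⟩
  have hSbdd : BddBelow S := ⟨δ, fun x hx => hx.1.1⟩
  have hScl : IsClosed S := by
    have hsub : Set.Icc δ b ⊆ Set.Ico (0:ℝ) 1 := fun x hx =>
      ⟨le_trans hδpos.le hx.1, lt_of_le_of_lt hx.2 hb.2⟩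
    have hcont : ContinuousOn u (Set.Icc δ b) := hu.continuousOn.mono hsub
    exact hcont.preimage_isClosed_of_isClosed isClosed_Icc isClosed_Iic
  set ρ₀ := sInf S with hρ₀def
  have hρ₀S : ρ₀ ∈ S := hScl.csInf_mem hSne hSbdd
  have hρ₀δ : δ ≤ ρ₀ := hρ₀S.1.1
  have hρ₀b : ρ₀ ≤ b := hρ₀S.1.2
  have huρ₀ : u ρ₀ ≤ 0 := hρ₀S.2
  have hρ₀pos : 0 < ρ₀ := lt_of_lt_of_le hδpos hρ₀δ
  have hρ₀1 : ρ₀ < 1 := lt_of_le_of_lt hρ₀b hb.2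
  have hδρ₀ : δ < ρ₀ := by
    rcases lt_or_eq_of_le hρ₀δ with h | h
    · exact h
    · exfalso
      have h1 := hupos0 δ ⟨hδpos, le_refl δ⟩
      rw [h] at h1
      linarith
  have hupos : ∀ x ∈ Set.Ioo (0:ℝ) ρ₀, 0 < u x := by
    intro x hx
    rcases le_or_gt x δ with h | h
    · exact hupos0 x ⟨hx.1, h⟩
    · by_contra hle
      push_neg at hle
      have hxS : x ∈ S := ⟨⟨h.le, le_trans hx.2.le hρ₀b⟩, hle⟩
      have := csInf_le hSbdd hxS
      linarith [hx.2]
  -- E facts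
  have hEd : ∀ ρ ∈ Set.Ioo (0:ℝ) 1,
      HasDerivAt (Ef lam u) ((lam-1)^2*ρ^2*tf lam ρ*(u ρ*θf ρ)/(1-ρ^2)) ρ := fun ρ hρ =>
    Ef_hasDerivAt lam u hρ (hdu ρ hρ) (hdu1 ρ hρ) (heq ρ hρ)
  have hsub₀ : Set.Ioo (0:ℝ) ρ₀ ⊆ Set.Ioo (0:ℝ) 1 :=
    Set.Ioo_subset_Ioo (le_refl 0) hρ₀1.le
  have hEmono : MonotoneOn (Ef lam u) (Set.Ioo (0:ℝ) ρ₀) := by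
    apply monotoneOn_of_deriv_nonneg (convex_Ioo 0 ρ₀)
    · exact fun x hx => (hEd x (hsub₀ hx)).continuousAt.continuousWithinAt
    · rw [interior_Ioo]
      exact fun x hx => (hEd x (hsub₀ hx)).differentiableAt.differentiableWithinAt
    · rw [interior_Ioo]
      intro x hx
      have hx' := hsub₀ hx
      rw [(hEd x hx').deriv]
      have h1 : (0:ℝ) < 1 - x^2 := by nlinarith [hx'.1, hx'.2]
      have htp := tf_pos lam ⟨by linarith [hx'.1], hx'.2⟩
      have hup := hupos x hx
      have hθp := θf_pos hx'.1
      apply div_nonneg _ h1.le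
      have : (0:ℝ) ≤ (lam-1)^2 := sq_nonneg _
      positivity
  -- E tends to 0 at 0+
  have hE0 : Filter.Tendsto (Ef lam u) (nhdsWithin 0 (Set.Ioo (0:ℝ) 1)) (nhds 0) := by
    have htend_u : Filter.Tendsto u (nhdsWithin 0 (Set.Ioo (0:ℝ) 1)) (nhds 0) := by
      have h := (hu.continuousOn 0 h0Ico).mono_left (nhdsWithin_mono 0 hIoo)
      rwa [h0] at h
    have htend_du : Filter.Tendsto (deriv u) (nhdsWithin 0 (Set.Ioo (0:ℝ) 1)) (nhds a) := by
      have hcd := hu.continuousOn_derivWithin (uniqueDiffOn_Ico 0 1) (by norm_num)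
      have h1 := (hcd 0 h0Ico).mono_left (nhdsWithin_mono 0 hIoo)
      refine h1.congr' ?_
      filter_upwards [eventually_mem_nhdsWithin] with x hx
      exact derivWithin_of_mem_nhds (Filter.mem_of_superset (hopen.mem_nhds hx) hIoo)
    have htend_t : Filter.Tendsto (tf lam) (nhdsWithin 0 (Set.Ioo (0:ℝ) 1)) (nhds 1) := by
      have h1 : ContinuousAt (fun x:ℝ => 1 - x^2) 0 := by fun_prop
      have h3 : ContinuousAt (tf lam) 0 := h1.rpow_const (Or.inl (by norm_num))
      have h4 : Filter.Tendsto (tf lam) (nhdsWithin 0 (Set.Ioo (0:ℝ) 1)) (nhds (tf lam 0)) :=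
        h3.continuousWithinAt
      have h5 : tf lam 0 = 1 := by
        norm_num [tf]
      rwa [h5] at h4
    have htend_θ : Filter.Tendsto θf (nhdsWithin 0 (Set.Ioo (0:ℝ) 1)) (nhds 0) := by
      have h4 : Filter.Tendsto θf (nhdsWithin 0 (Set.Ioo (0:ℝ) 1)) (nhds (θf 0)) :=
        (hasDerivAt_θf 0).continuousAt.continuousWithinAt
      have h5 : θf 0 = 0 := by norm_num [θf]
      rwa [h5] at h4
    have htend_θd : Filter.Tendsto θd (nhdsWithin 0 (Set.Ioo (0:ℝ) 1)) (nhds 2) := by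
      have h4 : Filter.Tendsto θd (nhdsWithin 0 (Set.Ioo (0:ℝ) 1)) (nhds (θd 0)) :=
        (hasDerivAt_θd 0).continuousAt.continuousWithinAt
      have h5 : θd 0 = 2 := by norm_num [θd]
      rwa [h5] at h4
    have htend_p1 : Filter.Tendsto (fun x:ℝ => x^2*(1-x^2)) (nhdsWithin 0 (Set.Ioo (0:ℝ) 1)) (nhds 0) := by
      have h4 : ContinuousAt (fun x:ℝ => x^2*(1-x^2)) 0 := by fun_prop
      have h5 : Filter.Tendsto (fun x:ℝ => x^2*(1-x^2)) (nhdsWithin 0 (Set.Ioo (0:ℝ) 1))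
          (nhds ((0:ℝ)^2*(1-(0:ℝ)^2))) := h4.continuousWithinAt
      have h6 : ((0:ℝ)^2*(1-(0:ℝ)^2)) = 0 := by norm_num
      rwa [h6] at h5
    have htend_p3 : Filter.Tendsto (fun x:ℝ => (lam-1)*x^3) (nhdsWithin 0 (Set.Ioo (0:ℝ) 1)) (nhds 0) := by
      have h4 : ContinuousAt (fun x:ℝ => (lam-1)*x^3) 0 := by fun_prop
      have h5 : Filter.Tendsto (fun x:ℝ => (lam-1)*x^3) (nhdsWithin 0 (Set.Ioo (0:ℝ) 1))
          (nhds ((lam-1)*(0:ℝ)^3)) := h4.continuousWithinAt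
      have h6 : ((lam-1)*(0:ℝ)^3) = 0 := by norm_num
      rwa [h6] at h5
    have hbig := ((htend_p1.mul htend_t).mul ((htend_du.mul htend_θ).sub (htend_u.mul htend_θd))).sub
      ((htend_p3.mul htend_t).mul (htend_u.mul htend_θ))
    have hval : ((0:ℝ)*1*(a*0 - 0*2)) - (0*1*(0*0)) = 0 := by norm_num
    rw [hval] at hbig
    exact hbig
  -- E nonneg on (0, ρ₀)
  have hEnn : ∀ x ∈ Set.Ioo (0:ℝ) ρ₀, 0 ≤ Ef lam u x := by
    intro x hx
    apply le_of_tendsto hE0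
    have hlt : ∀ᶠ y in nhdsWithin 0 (Set.Ioo (0:ℝ) 1), y < x :=
      (eventually_lt_nhds hx.1).filter_mono nhdsWithin_le_nhds
    filter_upwards [hlt, eventually_mem_nhdsWithin] with y hyx hy
    exact hEmono ⟨hy.1, lt_trans hyx hx.2⟩ hx hyx.le
  -- F monotone on [δ, ρ₀]
  have hFd : ∀ x ∈ Set.Ioo (0:ℝ) 1, HasDerivAt (Ff lam u) (Ef lam u x/(x^2*(1-x^2)*θf x^2)) x :=
    fun x hx => Ff_hasDerivAt lam u hx (hdu x hx)
  have hIccsub : Set.Icc δ ρ₀ ⊆ Set.Ioo (0:ℝ) 1 := fun x hx =>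
    ⟨lt_of_lt_of_le hδpos hx.1, lt_of_le_of_lt hx.2 hρ₀1⟩
  have hFmono : MonotoneOn (Ff lam u) (Set.Icc δ ρ₀) := by
    apply monotoneOn_of_deriv_nonneg (convex_Icc δ ρ₀)
    · exact fun x hx => (hFd x (hIccsub hx)).continuousAt.continuousWithinAt
    · rw [interior_Icc]
      exact fun x hx =>
        (hFd x (hIccsub (Set.Ioo_subset_Icc_self hx))).differentiableAt.differentiableWithinAt
    · rw [interior_Icc]
      intro x hx
      have hx' := hIccsub (Set.Ioo_subset_Icc_self hx)
      rw [(hFd x hx').deriv]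
      apply div_nonneg (hEnn x ⟨hx'.1, hx.2⟩)
      have h1 : (0:ℝ) < 1 - x^2 := by nlinarith [hx'.1, hx'.2]
      have hθp := θf_pos hx'.1
      positivity
  have hcontra := hFmono ⟨le_refl δ, hδρ₀.le⟩ ⟨hδρ₀.le, le_refl ρ₀⟩ hδρ₀.le
  have hFδ : 0 < Ff lam u δ :=
    mul_pos (div_pos (hupos0 δ ⟨hδpos, le_refl δ⟩) (θf_pos hδpos))
      (tf_pos lam ⟨by linarith, hδ1⟩)
  have hFρ₀ : Ff lam u ρ₀ ≤ 0 := by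
    apply mul_nonpos_of_nonpos_of_nonneg
    · exact div_nonpos_of_nonpos_of_nonneg huρ₀ (θf_pos hρ₀pos).le
    · exact (tf_pos lam ⟨by linarith, hρ₀1⟩).le
  linarith
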